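/- Suppose 𝔄 = {A_n}_{n≥1} is admissible, F is a collection of 𝔄-operations, and U is an 𝔄-ultrafilter which is strongly reductible for F. Then U is idempotent for F with respect to 𝔄, i.e., f_*^𝔄(U,…,U) = U for every f ∈ F. -/

import Mathlib

/-- A field of sets over `S`: a nonempty collection of subsets of `S` closed under
finite unions, finite intersections and complementation. -/
def IsFieldOfSets {S : Type*} (A : Set (Set S)) : Prop :=
  A.Nonempty ∧ (∀ X ∈ A, ∀ Y ∈ A, X ∪ Y ∈ A) ∧ (∀ X ∈ A, ∀ Y ∈ A, X ∩ Y ∈ A) ∧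
    ∀ X ∈ A, Xᶜ ∈ A

/-- `U` is an ultrafilter on the field of sets `A`. -/
def IsUltraOn {S : Type*} (A U : Set (Set S)) : Prop :=
  U ⊆ A ∧ (∀ X ∈ U, ∀ Y ∈ U, X ∩ Y ∈ U) ∧ Set.univ ∈ U ∧ ∅ ∉ U ∧
    ∀ X ∈ A, X ∈ U ∨ Xᶜ ∈ U

/-- An admissible family `𝔄 = {A_n}_{n ≥ 1}` of fields of sets over `ω^n`:
each `A (n+1)` is a field of sets over `Fin (n+1) → ℕ`, the family is closed under
cyclic shifts `(a₁,…,aₙ) ↦ (a₂,…,aₙ,a₁)` of coordinates, and under slices obtained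
by fixing the first coordinate.  (The value `A 0` is irrelevant.) -/
def Adm (A : ∀ n : ℕ, Set (Set (Fin n → ℕ))) : Prop :=
  (∀ n : ℕ, IsFieldOfSets (A (n + 1))) ∧
  (∀ n : ℕ, ∀ X ∈ A (n + 2),
      (fun a : Fin (n + 2) → ℕ => Fin.snoc (Fin.tail a) (a 0)) '' X ∈ A (n + 2)) ∧
  (∀ n : ℕ, ∀ X ∈ A (n + 2), ∀ c : ℕ,
      {t : Fin (n + 1) → ℕ | (Fin.cons c t : Fin (n + 2) → ℕ) ∈ X} ∈ A (n + 1))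

/-- `U` is an `𝔄`-ultrafilter: an ultrafilter on `A 1` satisfying the Fubini property:
for every `n ≥ 1` and `X ∈ A (n+1)`,
`{(a₁,…,aₙ) : {a_{n+1} : (a₁,…,a_{n+1}) ∈ X} ∈ U} ∈ A n`. -/
def IsAUltra (A : ∀ n : ℕ, Set (Set (Fin n → ℕ))) (U : Set (Set (Fin 1 → ℕ))) : Prop :=
  IsUltraOn (A 1) U ∧
  ∀ n : ℕ, ∀ X ∈ A (n + 2),
    {a : Fin (n + 1) → ℕ |
      {t : Fin 1 → ℕ | (Fin.snoc a (t 0) : Fin (n + 2) → ℕ) ∈ X} ∈ U} ∈ A (n + 1)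

/-- The iterated Fubini product `U 0 ⊗ U 1 ⊗ ⋯ ⊗ U (m-1)`, an ultrafilter on `A m`:
`X` is in the product iff
`{(a₁,…,a_{m-1}) : {a_m : (a₁,…,a_m) ∈ X} ∈ U (m-1)}` is in the product of the
first `m - 1` ultrafilters. -/
def FProd (A : ∀ n : ℕ, Set (Set (Fin n → ℕ))) (U : ℕ → Set (Set (Fin 1 → ℕ))) :
    (m : ℕ) → Set (Set (Fin m → ℕ))
  | 0 => Set.univ
  | 1 => U 0
  | (m + 2) =>
    {X ∈ A (m + 2) |
      {a : Fin (m + 1) → ℕ |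
        {t : Fin 1 → ℕ | (Fin.snoc a (t 0) : Fin (m + 2) → ℕ) ∈ X} ∈ U (m + 1)}
        ∈ FProd A U (m + 1)}

/-- `f` is an (`m`-ary) `𝔄`-operation: for every `n ≥ 1` and `X ∈ A n`, the set
`{(a₁,…,a_{n+m-1}) : (a₁,…,a_{n-1}, f(a_n,…,a_{n+m-1})) ∈ X}` belongs to `A (n+m-1)`. -/
def IsAOp (A : ∀ n : ℕ, Set (Set (Fin n → ℕ))) {m : ℕ} (f : (Fin m → ℕ) → ℕ) : Prop :=
  ∀ p : ℕ, ∀ X ∈ A (p + 1),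
    {b : Fin (p + m) → ℕ |
      (Fin.snoc (fun i : Fin p => b (Fin.castAdd m i))
          (f (fun j : Fin m => b (Fin.natAdd p j))) : Fin (p + 1) → ℕ) ∈ X}
      ∈ A (p + m)

/-- `f_*^𝔄(U 0, …, U (m-1)) = {X ∈ A 1 : f⁻¹[X] ∈ U 0 ⊗ ⋯ ⊗ U (m-1)}`. -/
def fStar (A : ∀ n : ℕ, Set (Set (Fin n → ℕ))) (U : ℕ → Set (Set (Fin 1 → ℕ)))
    {m : ℕ} (f : (Fin m → ℕ) → ℕ) : Set (Set (Fin 1 → ℕ)) :=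
  {X ∈ A 1 | {x : Fin m → ℕ | (fun _ : Fin 1 => f x) ∈ X} ∈ FProd A U m}

/-- An operation on `ω` of arity `op.1`, represented as a function on lists
(its values on lists of length `op.1` are the relevant ones). -/
abbrev NatOp : Type := ℕ × (List ℕ → ℕ)

/-- `toFun op` is `op` viewed as a genuine `op.1`-ary operation on `ω`. -/
def NatOp.toFun (op : NatOp) : (Fin op.1 → ℕ) → ℕ := fun x => op.2 (List.ofFn x)

/-- `applyOps [h₁,…,hₘ] l` splits `l` into consecutive blocks of lengths given by the
arities of the `hᵢ` and returns the list `[h₁(block₁), …, hₘ(blockₘ)]`. -/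
def applyOps : List NatOp → List ℕ → List ℕ
  | [], _ => []
  | h :: hs, l => h.2 (l.take h.1) :: applyOps hs (l.drop h.1)

/-- The orderly terms over `F`: the smallest collection of operations on `ω` including
`F`, containing the (unary) identity, and closed under orderly composition
`f(x̄₁,…,x̄ₙ) = g(h₁(x̄₁),…,hₙ(x̄ₙ))`. -/
inductive OrderlyTerm (F : Set NatOp) : NatOp → Prop where
  | base {op : NatOp} (h : op ∈ F) : OrderlyTerm F op
  | id : OrderlyTerm F (1, fun l => l.headI)
  | comp {g : NatOp} (hs : List NatOp) (hg : OrderlyTerm F g)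
      (hhs : ∀ h ∈ hs, OrderlyTerm F h) (hlen : g.1 = hs.length) :
      OrderlyTerm F ((hs.map Prod.fst).sum, fun l => g.2 (applyOps hs l))

/-- `FRset F a`: the set of finite reductions of the infinite sequence `a` with respect
to `F`, i.e. all values `f(a i₁, …, a iₘ)` of orderly terms `f` over `F` on finite
subsequences `a i₁, …, a iₘ` (with `i₁ < ⋯ < iₘ`) of `a`. -/
def FRset (F : Set NatOp) (a : ℕ → ℕ) : Set ℕ :=
  {z | ∃ op : NatOp, OrderlyTerm F op ∧
    ∃ l : List ℕ, l.Chain' (· < ·) ∧ l.length = op.1 ∧ op.2 (l.map a) = z}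

/-- `b` is a reduction of `a` with respect to `F` (`b ≤_F a`): each `b n` is obtained by
applying an orderly term over `F` to a finite block of terms of `a`, the blocks being
disjoint, consecutive, and in increasing order of index. -/
def IsReduction (F : Set NatOp) (b a : ℕ → ℕ) : Prop :=
  ∃ ops : ℕ → NatOp, ∃ idx : ℕ → List ℕ,
    (∀ n, OrderlyTerm F (ops n)) ∧
    (∀ n, (idx n).length = (ops n).1) ∧
    (∀ n, (idx n).Chain' (· < ·)) ∧
    (∀ n m : ℕ, n < m → ∀ x ∈ idx n, ∀ y ∈ idx m, x < y) ∧
    ∀ n, b n = (ops n).2 ((idx n).map a)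

/-- `(ω, F)` is a Ramsey algebra: for every infinite sequence `a` and every `X ⊆ ω`
there is a reduction `b ≤_F a` with `FR_F(b) ⊆ X` or `FR_F(b) ∩ X = ∅`. -/
def IsRamseyAlg (F : Set NatOp) : Prop :=
  ∀ (a : ℕ → ℕ) (X : Set ℕ), ∃ b : ℕ → ℕ, IsReduction F b a ∧
    (FRset F b ⊆ X ∨ Disjoint (FRset F b) X)

section St14Aux

variable {A : ∀ n : ℕ, Set (Set (Fin n → ℕ))} {U : Set (Set (Fin 1 → ℕ))}

lemma st14_up (hU : IsUltraOn (A 1) U) {S Y : Set (Fin 1 → ℕ)}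
    (hS : S ∈ U) (hY : Y ∈ A 1) (hSY : S ⊆ Y) : Y ∈ U := by
  rcases hU.2.2.2.2 Y hY with h | h
  · exact h
  · exfalso
    have hi := hU.2.1 S hS Yᶜ h
    have he : S ∩ Yᶜ = ∅ := by
      ext t
      simp only [Set.mem_inter_iff, Set.mem_compl_iff, Set.mem_empty_iff_false, iff_false,
        not_and, not_not]
      exact fun ht => hSY ht
    rw [he] at hi
    exact hU.2.2.2.1 hi

lemma st14_snoc0 (g : Fin 0 → ℕ) (z : ℕ) : (Fin.snoc g z : Fin 1 → ℕ) = fun _ => z := by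
  funext j
  have hj : j = Fin.last 0 := by
    have := j.isLt
    exact Fin.ext (by omega)
  rw [hj, Fin.snoc_last]

lemma st14_fin1_eta (t : Fin 1 → ℕ) : (fun _ : Fin 1 => t 0) = t := by
  funext j
  refine congrArg t (Fin.ext ?_)
  have := j.isLt
  omega

lemma st14_snoc_eq_cons {n : ℕ} (b : Fin (n + 1) → ℕ) (z : ℕ) :
    (Fin.snoc b z : Fin (n + 2) → ℕ) = Fin.cons (b 0) (Fin.snoc (Fin.tail b) z) := by
  rw [Fin.cons_snoc_eq_snoc_cons, Fin.cons_self_tail]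

lemma st14_slice (hA : Adm A) : ∀ n : ℕ, ∀ Y ∈ A (n + 2), ∀ b : Fin (n + 1) → ℕ,
    {t : Fin 1 → ℕ | (Fin.snoc b (t 0) : Fin (n + 2) → ℕ) ∈ Y} ∈ A 1 := by
  intro n
  induction n with
  | zero =>
    intro Y hY b
    have h := hA.2.2 0 Y hY (b 0)
    have he : {t : Fin 1 → ℕ | (Fin.snoc b (t 0) : Fin 2 → ℕ) ∈ Y}
        = {t : Fin 1 → ℕ | (Fin.cons (b 0) t : Fin 2 → ℕ) ∈ Y} := by
      ext t
      have : (Fin.snoc b (t 0) : Fin 2 → ℕ) = Fin.cons (b 0) t := by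
        rw [st14_snoc_eq_cons, st14_snoc0, st14_fin1_eta]
      simp only [Set.mem_setOf_eq, this]
    rw [he]
    exact h
  | succ n ih =>
    intro Y hY b
    have h1 := hA.2.2 (n + 1) Y hY (b 0)
    have h2 := ih _ h1 (Fin.tail b)
    have he : {t : Fin 1 → ℕ | (Fin.snoc b (t 0) : Fin (n + 3) → ℕ) ∈ Y}
        = {t : Fin 1 → ℕ |
            (Fin.snoc (Fin.tail b) (t 0) : Fin (n + 2) → ℕ) ∈
              {s : Fin (n + 2) → ℕ | (Fin.cons (b 0) s : Fin (n + 3) → ℕ) ∈ Y}} := by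
      ext t
      simp only [Set.mem_setOf_eq, st14_snoc_eq_cons b (t 0)]
    rw [he]
    exact h2

end St14Aux
/-- Auxiliary: tuples whose entries are finite reductions of `a` on successive blocks. -/
def st14Good (F : Set NatOp) (a : ℕ → ℕ) (k : ℕ) : Set (Fin k → ℕ) :=
  {x | ∃ ops : Fin k → NatOp, ∃ ls : Fin k → List ℕ,
    (∀ j, OrderlyTerm F (ops j)) ∧ (∀ j, (ls j).length = (ops j).1) ∧
    (List.ofFn ls).flatten.Chain' (· < ·) ∧ ∀ j, x j = (ops j).2 ((ls j).map a)}

lemma st14_le_foldr : ∀ (l : List ℕ), ∀ u ∈ l, u ≤ l.foldr max 0 := by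
  intro l
  induction l with
  | nil => simp
  | cons h t ih =>
    intro u hu
    rcases List.mem_cons.mp hu with rfl | hu
    · exact le_max_left _ _
    · exact le_trans (ih u hu) (le_max_right _ _)

lemma st14_applyOps : ∀ (k : ℕ) (ops : Fin k → NatOp) (Ls : Fin k → List ℕ),
    (∀ j, (Ls j).length = (ops j).1) →
    applyOps (List.ofFn ops) (List.ofFn Ls).flatten = List.ofFn (fun j => (ops j).2 (Ls j)) := by
  intro k
  induction k with
  | zero => intro ops Ls _; simp [applyOps]
  | succ k ih =>
    intro ops Ls h
    rw [List.ofFn_succ (f := ops), List.ofFn_succ (f := Ls),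
      List.ofFn_succ (f := fun j => (ops j).2 (Ls j)), List.flatten_cons]
    simp only [applyOps]
    rw [← h 0, List.take_left, List.drop_left]
    congr 1
    exact ih _ _ (fun j => h j.succ)

lemma st14_chain_ext {J l : List ℕ} {i : ℕ} (hJ : J.Chain' (· < ·)) (hl : l.Chain' (· < ·))
    (hb : ∀ u ∈ J, u < i) : (J ++ l.map (· + i)).Chain' (· < ·) := by
  unfold List.Chain' at hJ hl ⊢
  rw [List.isChain_append]
  refine ⟨hJ, ?_, ?_⟩
  · rw [List.isChain_map]
    exact hl.imp (fun u v huv => by omega)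
  · intro x hx y hy
    have hxJ : x ∈ J := List.mem_of_mem_getLast? hx
    have hyl : y ∈ l.map (· + i) := List.mem_of_mem_head? hy
    obtain ⟨w, -, rfl⟩ := List.mem_map.mp hyl
    have := hb x hxJ
    omega

lemma st14_good_one {F : Set NatOp} {a : ℕ → ℕ} (t : Fin 1 → ℕ)
    (ht : t 0 ∈ FRset F a) : t ∈ st14Good F a 1 := by
  obtain ⟨op', hot, l, hc, hlen, hv⟩ := ht
  refine ⟨fun _ => op', fun _ => l, fun _ => hot, fun _ => hlen, ?_, ?_⟩
  · simpa only [List.ofFn_succ, List.ofFn_zero, List.flatten_cons, List.flatten_nil,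
      List.append_nil] using hc
  · intro j
    have hj : j = 0 := by
      refine Fin.ext ?_
      have := j.isLt
      omega
    rw [hj]
    exact hv.symm

lemma st14_good_snoc {F : Set NatOp} {a : ℕ → ℕ} {k : ℕ} {b : Fin (k + 1) → ℕ}
    (hb : b ∈ st14Good F a (k + 1)) :
    ∃ i : ℕ, ∀ z, z ∈ FRset F (fun j => a (j + i)) →
      (Fin.snoc b z : Fin (k + 2) → ℕ) ∈ st14Good F a (k + 2) := by
  obtain ⟨ops, ls, h1, h2, h3, h4⟩ := hb
  set i := (List.ofFn ls).flatten.foldr max 0 + 1 with hi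
  refine ⟨i, fun z hz => ?_⟩
  obtain ⟨op', hot, l, hc, hlen, hv⟩ := hz
  refine ⟨Fin.snoc ops op', Fin.snoc ls (l.map (· + i)), ?_, ?_, ?_, ?_⟩
  · intro j
    induction j using Fin.lastCases with
    | last => simpa using hot
    | cast j' => simpa using h1 j'
  · intro j
    induction j using Fin.lastCases with
    | last => simpa using hlen
    | cast j' => simpa using h2 j'
  · rw [List.ofFn_succ' (f := Fin.snoc ls (l.map (· + i)))]
    simp only [Fin.snoc_castSucc, Fin.snoc_last, List.concat_eq_append,
      List.flatten_append, List.flatten_cons, List.flatten_nil, List.append_nil]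
    refine st14_chain_ext h3 hc ?_
    intro u hu
    rw [show (List.ofFn fun i => ls i) = List.ofFn ls from rfl] at hu
    have := st14_le_foldr _ u hu
    omega
  · intro j
    induction j using Fin.lastCases with
    | last =>
      simp only [Fin.snoc_last]
      rw [List.map_map]
      exact hv.symm
    | cast j' =>
      simp only [Fin.snoc_castSucc]
      exact h4 j'
lemma st14_comp {F : Set NatOp} {op : NatOp} (hop : op ∈ F) {a : ℕ → ℕ}
    {x : Fin op.1 → ℕ} (hx : x ∈ st14Good F a op.1) : op.toFun x ∈ FRset F a := by
  obtain ⟨ops, ls, h1, h2, h3, h4⟩ := hx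
  refine ⟨(((List.ofFn ops).map Prod.fst).sum, fun l => op.2 (applyOps (List.ofFn ops) l)),
    ?_, (List.ofFn ls).flatten, h3, ?_, ?_⟩
  · exact OrderlyTerm.comp (List.ofFn ops) (.base hop)
      (fun h hh => by
        obtain ⟨j, rfl⟩ := List.mem_ofFn.mp hh
        exact h1 j)
      (by simp)
  · rw [List.length_flatten, List.map_ofFn, List.map_ofFn]
    have he : (List.length ∘ ls) = (Prod.fst ∘ ops) := funext h2
    rw [he]
  · have hm : List.map a (List.ofFn ls).flatten = (List.ofFn fun j => List.map a (ls j)).flatten := by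
      rw [List.map_flatten, List.map_ofFn]
      rfl
    show op.2 (applyOps (List.ofFn ops) (List.map a (List.ofFn ls).flatten)) = op.toFun x
    rw [hm, st14_applyOps _ _ _ (fun j => by simpa using h2 j)]
    unfold NatOp.toFun
    have hx : (fun j => (ops j).2 (List.map a (ls j))) = x := funext fun j => (h4 j).symm
    rw [hx]

lemma st14_cast (A : ∀ n : ℕ, Set (Set (Fin n → ℕ))) :
    ∀ {n n' : ℕ} (e : n = n') (X : Set (Fin n → ℕ)), X ∈ A n →
      {x : Fin n' → ℕ | (fun i => x (Fin.cast e i)) ∈ X} ∈ A n' := by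
  intro n n' e
  subst e
  intro X hX
  exact hX

lemma st14_ZinA {A : ∀ n : ℕ, Set (Set (Fin n → ℕ))} {m : ℕ} (f : (Fin m → ℕ) → ℕ)
    (hf : IsAOp A f) {X : Set (Fin 1 → ℕ)} (hX : X ∈ A 1) :
    {x : Fin m → ℕ | (fun _ : Fin 1 => f x) ∈ X} ∈ A m := by
  have h := hf 0 X hX
  have h2 := st14_cast A (Nat.zero_add m) _ h
  have he : {x : Fin m → ℕ |
      (fun i => x (Fin.cast (Nat.zero_add m) i)) ∈
        {b : Fin (0 + m) → ℕ |
          (Fin.snoc (fun i : Fin 0 => b (Fin.castAdd m i))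
            (f (fun j : Fin m => b (Fin.natAdd 0 j))) : Fin (0 + 1) → ℕ) ∈ X}}
      = {x : Fin m → ℕ | (fun _ : Fin 1 => f x) ∈ X} := by
    ext x
    simp only [Set.mem_setOf_eq]
    have hy : (fun j : Fin m => x (Fin.cast (Nat.zero_add m) (Fin.natAdd 0 j))) = x := by
      funext j
      refine congrArg x (Fin.ext ?_)
      simp
    rw [st14_snoc0, hy]
  rw [he] at h2
  exact h2

lemma st14_L {A : ∀ n : ℕ, Set (Set (Fin n → ℕ))} (hA : Adm A)
    {U : Set (Set (Fin 1 → ℕ))} (hU : IsAUltra A U) {F : Set NatOp} {a : ℕ → ℕ}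
    (ha2 : ∀ i : ℕ, {t : Fin 1 → ℕ | t 0 ∈ FRset F (fun j => a (j + i))} ∈ U) :
    ∀ k : ℕ, k ≠ 0 → ∀ Y ∈ A k, st14Good F a k ⊆ Y → Y ∈ FProd A (fun _ => U) k := by
  intro k hk
  obtain ⟨k', rfl⟩ : ∃ k', k = k' + 1 := ⟨k - 1, by omega⟩
  clear hk
  induction k' with
  | zero =>
    intro Y hY hG
    show Y ∈ U
    have ha20 := ha2 0
    have h0 : (fun j => a (j + 0)) = a := by funext j; rw [Nat.add_zero]
    rw [h0] at ha20
    refine st14_up hU.1 ha20 hY ?_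
    intro t ht
    exact hG (st14_good_one t ht)
  | succ k ih =>
    intro Y hY hG
    refine ⟨hY, ?_⟩
    apply ih
    · exact hU.2 k Y hY
    · intro b hb
      obtain ⟨i, hsn⟩ := st14_good_snoc hb
      show {t : Fin 1 → ℕ | (Fin.snoc b (t 0) : Fin (k + 2) → ℕ) ∈ Y} ∈ U
      refine st14_up hU.1 (ha2 i) (st14_slice hA k Y hY b) ?_
      intro t ht
      exact hG (hsn (t 0) ht)

lemma st14_disj {A : ∀ n : ℕ, Set (Set (Fin n → ℕ))} {U : Set (Set (Fin 1 → ℕ))}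
    (hU : IsAUltra A U) :
    ∀ k : ℕ, k ≠ 0 → ∀ Z W : Set (Fin k → ℕ), Z ∈ FProd A (fun _ => U) k →
      W ∈ FProd A (fun _ => U) k → Z ∩ W = ∅ → False := by
  intro k hk
  obtain ⟨k', rfl⟩ : ∃ k', k = k' + 1 := ⟨k - 1, by omega⟩
  clear hk
  induction k' with
  | zero =>
    intro Z W hZ hW hZW
    have h := hU.1.2.1 Z hZ W hW
    rw [hZW] at h
    exact hU.1.2.2.2.1 h
  | succ k ih =>
    intro Z W hZ hW hZW
    obtain ⟨hZA, hZ'⟩ := hZ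
    obtain ⟨hWA, hW'⟩ := hW
    refine ih _ _ hZ' hW' ?_
    ext b
    simp only [Set.mem_inter_iff, Set.mem_setOf_eq, Set.mem_empty_iff_false, iff_false, not_and]
    intro h1 h2
    have h3 := hU.1.2.1 _ h1 _ h2
    have h4 : {t : Fin 1 → ℕ | (Fin.snoc b (t 0) : Fin (k + 2) → ℕ) ∈ Z} ∩
        {t : Fin 1 → ℕ | (Fin.snoc b (t 0) : Fin (k + 2) → ℕ) ∈ W} = ∅ := by
      ext t
      simp only [Set.mem_inter_iff, Set.mem_setOf_eq, Set.mem_empty_iff_false, iff_false,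
        not_and]
      intro hz hw
      have hm : (Fin.snoc b (t 0) : Fin (k + 2) → ℕ) ∈ Z ∩ W := ⟨hz, hw⟩
      rw [hZW] at hm
      exact hm
    rw [h4] at h3
    exact hU.1.2.2.2.1 h3

lemma st14_dir1 {A : ∀ n : ℕ, Set (Set (Fin n → ℕ))} (hA : Adm A)
    {F : Set NatOp} (har : ∀ op ∈ F, 1 ≤ op.1)
    (hops : ∀ op ∈ F, IsAOp A op.toFun)
    {U : Set (Set (Fin 1 → ℕ))} (hU : IsAUltra A U)
    (hsr : ∀ X ∈ U, ∃ a : ℕ → ℕ,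
      (∀ z ∈ FRset F a, (fun _ : Fin 1 => z) ∈ X) ∧
      ∀ i : ℕ, {t : Fin 1 → ℕ | t 0 ∈ FRset F (fun j => a (j + i))} ∈ U)
    {op : NatOp} (hop : op ∈ F) {X : Set (Fin 1 → ℕ)} (hX : X ∈ U) :
    X ∈ fStar A (fun _ => U) op.toFun := by
  have hXA : X ∈ A 1 := hU.1.1 hX
  obtain ⟨a, ha1, ha2⟩ := hsr X hX
  refine ⟨hXA, ?_⟩
  refine st14_L hA hU ha2 op.1 (by have := har op hop; omega) _ ?_ ?_
  · exact st14_ZinA op.toFun (hops op hop) hXA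
  · intro x hx
    exact ha1 _ (st14_comp hop hx)
/-- A strongly reductible `𝔄`-ultrafilter is idempotent for `F` with respect to `𝔄`:
`f_*^𝔄(U,…,U) = U` for every `f ∈ F`. -/
theorem stmt14 (A : ∀ n : ℕ, Set (Set (Fin n → ℕ))) (hA : Adm A)
    (F : Set NatOp) (har : ∀ op ∈ F, 1 ≤ op.1)
    (hops : ∀ op ∈ F, IsAOp A op.toFun)
    (U : Set (Set (Fin 1 → ℕ))) (hU : IsAUltra A U)
    (hsr : ∀ X ∈ U, ∃ a : ℕ → ℕ,
      (∀ z ∈ FRset F a, (fun _ : Fin 1 => z) ∈ X) ∧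
      ∀ i : ℕ, {t : Fin 1 → ℕ | t 0 ∈ FRset F (fun j => a (j + i))} ∈ U) :
    ∀ op ∈ F, fStar A (fun _ => U) op.toFun = U := by
  intro op hop
  ext X
  constructor
  · rintro ⟨hXA, hXF⟩
    rcases hU.1.2.2.2.2 X hXA with h | h
    · exact h
    · exfalso
      obtain ⟨-, hcF⟩ := st14_dir1 hA har hops hU hsr hop h
      refine st14_disj hU op.1 (by have := har op hop; omega) _ _ hXF hcF ?_
      ext x
      simp only [Set.mem_inter_iff, Set.mem_setOf_eq, Set.mem_compl_iff,
        Set.mem_empty_iff_false, iff_false, not_and]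
      exact fun h1 h2 => h2 h1
  · intro hX
    exact st14_dir1 hA har hops hU hsr hop hX
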